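/- Scalar type criterion: with p odd, f ≥ 1, e' ≥ 1, b_i generic (e' ≤ b_i + e' ≤ p-1-e'), and a ∈ A = {0,...,e'}^f, the congruence Σ_{i=0}^{f-1} (b_i + 2a_i) p^{f-i} ≡ 0 (mod p^f - 1) holds if and only if either a_i = b_i = 0 for all i, or a_i = e' and b_i = p-1-2e' for all i. -/

import Mathlib

lemma geom_aux18 (p : ℤ) (f : ℕ) :
    ∑ i ∈ Finset.range f, (p - 1) * p ^ (f - 1 - i) = p ^ f - 1 := by
  rw [Finset.sum_range_reflect (fun j => (p - 1) * p ^ j) f, ← Finset.mul_sum, mul_comm,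
    geom_sum_mul]

/-- Scalar type criterion: `Σ (b_i + 2 a_i) p^{f-i} ≡ 0 (mod p^f - 1)` holds iff
either `a = b = 0` or `a_i = e'` and `b_i = p - 1 - 2e'` for all `i`. -/
theorem stmt_18 (p f e' : ℕ) (hp : p.Prime) (hodd : Odd p) (hf : 1 ≤ f) (he' : 1 ≤ e')
    (b a : ZMod f → ℤ)
    (hb : ∀ i, (e' : ℤ) ≤ b i + e' ∧ b i + e' ≤ (p : ℤ) - 1 - e')
    (ha : ∀ i, 0 ≤ a i ∧ a i ≤ (e' : ℤ)) :
    (((p : ℤ) ^ f - 1) ∣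
        ∑ i ∈ Finset.range f, (b (i : ZMod f) + 2 * a (i : ZMod f)) * (p : ℤ) ^ (f - i)) ↔
      ((∀ i, a i = 0 ∧ b i = 0) ∨
        (∀ i, a i = (e' : ℤ) ∧ b i = (p : ℤ) - 1 - 2 * e')) := by
  haveI : NeZero f := ⟨by omega⟩
  have hp2 : (2 : ℤ) ≤ (p : ℤ) := by exact_mod_cast hp.two_le
  have he1 : (1 : ℤ) ≤ (e' : ℤ) := by exact_mod_cast he'
  set c : ℕ → ℤ := fun i => b (i : ZMod f) + 2 * a (i : ZMod f) with hc
  have hc0 : ∀ i : ℕ, 0 ≤ c i := fun i => by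
    have h1 := (hb (i : ZMod f)).1; have h2 := (ha (i : ZMod f)).1
    simp only [hc]; linarith
  have hc1 : ∀ i : ℕ, c i ≤ (p : ℤ) - 1 := fun i => by
    have h1 := (hb (i : ZMod f)).2; have h2 := (ha (i : ZMod f)).2
    simp only [hc]; linarith
  -- rewrite the sum as p * T
  have hsplit : ∑ i ∈ Finset.range f, c i * (p : ℤ) ^ (f - i)
      = (p : ℤ) * ∑ i ∈ Finset.range f, c i * (p : ℤ) ^ (f - 1 - i) := by
    rw [Finset.mul_sum]
    refine Finset.sum_congr rfl fun i hi => ?_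
    have hi' : i < f := Finset.mem_range.mp hi
    have : f - i = (f - 1 - i) + 1 := by omega
    rw [this, pow_succ]; ring
  set T : ℤ := ∑ i ∈ Finset.range f, c i * (p : ℤ) ^ (f - 1 - i) with hT
  have hterm_nonneg : ∀ i ∈ Finset.range f, 0 ≤ c i * (p : ℤ) ^ (f - 1 - i) := fun i _ =>
    mul_nonneg (hc0 i) (pow_nonneg (by linarith) _)
  have hT0 : 0 ≤ T := Finset.sum_nonneg hterm_nonneg
  have hT1 : T ≤ (p : ℤ) ^ f - 1 := by
    rw [← geom_aux18 (p : ℤ) f]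
    refine Finset.sum_le_sum fun i _ => ?_
    exact mul_le_mul_of_nonneg_right (hc1 i) (pow_nonneg (by linarith) _)
  have hpos : (0 : ℤ) < (p : ℤ) ^ f - 1 := by
    have : (2 : ℤ) ≤ (p : ℤ) ^ f := by
      calc (2 : ℤ) ≤ (p : ℤ) := hp2
      _ = (p : ℤ) ^ 1 := (pow_one _).symm
      _ ≤ (p : ℤ) ^ f := pow_le_pow_right₀ (by linarith) hf
    linarith
  have hcop : IsCoprime ((p : ℤ) ^ f - 1) (p : ℤ) := by
    refine ⟨-1, (p : ℤ) ^ (f - 1), ?_⟩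
    have : (p : ℤ) ^ (f - 1) * (p : ℤ) = (p : ℤ) ^ f := by
      rw [← pow_succ]; congr 1; omega
    linarith [this]
  constructor
  · intro hdvd
    rw [hsplit] at hdvd
    have hdvdT : ((p : ℤ) ^ f - 1) ∣ T := hcop.dvd_of_dvd_mul_left hdvd
    have hTcases : T = 0 ∨ T = (p : ℤ) ^ f - 1 := by
      rcases hT0.lt_or_eq with h | h
      · right
        have := Int.le_of_dvd h hdvdT
        omega
      · left; omega
    rcases hTcases with h0 | h1
    · left
      have hsum0 : ∑ i ∈ Finset.range f, c i * (p : ℤ) ^ (f - 1 - i) = 0 := by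
        rw [← hT]; exact h0
      have hz := (Finset.sum_eq_zero_iff_of_nonneg hterm_nonneg).mp hsum0
      intro j
      have hjv : j.val < f := ZMod.val_lt j
      have hj := hz j.val (Finset.mem_range.mpr hjv)
      have hpow : (0 : ℤ) < (p : ℤ) ^ (f - 1 - j.val) := pow_pos (by linarith) _
      have hcz : c j.val = 0 := by
        rcases mul_eq_zero.mp hj with h | h
        · exact h
        · exact absurd h (by positivity)
      simp only [hc] at hcz
      rw [ZMod.natCast_rightInverse j] at hcz
      have h1 := (hb j).1; have h2 := (ha j).1
      constructor <;> linarith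
    · right
      have hTs : ∑ i ∈ Finset.range f, c i * (p : ℤ) ^ (f - 1 - i) = (p : ℤ) ^ f - 1 := by
        rw [← hT]; exact h1
      have hzero : ∑ i ∈ Finset.range f, (((p : ℤ) - 1) - c i) * (p : ℤ) ^ (f - 1 - i) = 0 := by
        have hsplit2 : ∑ i ∈ Finset.range f, (((p : ℤ) - 1) - c i) * (p : ℤ) ^ (f - 1 - i)
            = (∑ i ∈ Finset.range f, ((p : ℤ) - 1) * (p : ℤ) ^ (f - 1 - i))
              - ∑ i ∈ Finset.range f, c i * (p : ℤ) ^ (f - 1 - i) := by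
          rw [← Finset.sum_sub_distrib]
          exact Finset.sum_congr rfl fun i _ => by ring
        rw [hsplit2, geom_aux18, hTs, sub_self]
      have hnn : ∀ i ∈ Finset.range f,
          0 ≤ (((p : ℤ) - 1) - c i) * (p : ℤ) ^ (f - 1 - i) := fun i _ =>
        mul_nonneg (by linarith [hc1 i]) (pow_nonneg (by linarith) _)
      have hz := (Finset.sum_eq_zero_iff_of_nonneg hnn).mp hzero
      intro j
      have hjv : j.val < f := ZMod.val_lt j
      have hj := hz j.val (Finset.mem_range.mpr hjv)
      have hpow : (0 : ℤ) < (p : ℤ) ^ (f - 1 - j.val) := pow_pos (by linarith) _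
      have hcz : c j.val = (p : ℤ) - 1 := by
        rcases mul_eq_zero.mp hj with h | h
        · linarith
        · exact absurd h (by positivity)
      simp only [hc] at hcz
      rw [ZMod.natCast_rightInverse j] at hcz
      have h1 := (hb j).2; have h2 := (ha j).2
      constructor <;> linarith
  · rintro (h | h)
    · have : ∀ i ∈ Finset.range f, c i * (p : ℤ) ^ (f - i) = 0 := fun i _ => by
        simp only [hc]; rw [(h _).1, (h _).2]; ring
      rw [Finset.sum_congr rfl this, Finset.sum_const, smul_zero]
      exact dvd_zero _
    · have : ∑ i ∈ Finset.range f, c i * (p : ℤ) ^ (f - i)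
          = (p : ℤ) * ((p : ℤ) ^ f - 1) := by
        rw [hsplit, ← geom_aux18 (p : ℤ) f]
        congr 1
        refine Finset.sum_congr rfl fun i _ => ?_
        simp only [hc]; rw [(h _).1, (h _).2]; ring
      rw [this]
      exact Dvd.dvd.mul_left dvd_rfl _
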